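/- arXiv:2301.06852 — 3 statements merged into one kernel-verified Lean document; each statement's English description precedes it below -/
import Mathlib

section
/- Let β > 1, t > 0 and constants 0 < a ≤ b, c₁ > 0, c₂ > 0, C > 0 be given. Suppose that for each h ∈ (0,1) we are given real numbers d(h) ≥ 1 and p(h) > 0 such that a ≤ h·d(h) ≤ b and such that the two-sided bound (2π)^{-1/2} · exp(−C·h^{β−2}·t) · (c₁·h^{β−2}·t / d(h))^{d(h)} ≤ p(h) ≤ exp(C·h^{β−2}·t + 1) · (c₂·h^{β−2}·t / d(h))^{d(h)} holds. Then lim_{h→0⁺} [ (h / log(h^{β−1})) · log p(h) − h·d(h) ] = 0. -/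
open Filter Set

private lemma aux_main (β t c : ℝ) (ht : 0 < t) (hc : 0 < c)
    (h dh : ℝ) (h0 : 0 < h) (h1 : h < 1) (hβ1 : β - 1 ≠ 0) (hd1 : 1 ≤ dh) :
    h / Real.log (h ^ (β - 1)) * (dh * Real.log (c * h ^ (β - 2) * t / dh)) - h * dh
      = (h * dh) * (Real.log (c * t) - Real.log (h * dh)) / ((β - 1) * Real.log h) := by
  have hl : Real.log h < 0 := Real.log_neg h0 h1
  have hlog : Real.log (h ^ (β - 1)) = (β - 1) * Real.log h := Real.log_rpow h0 _
  have hd0 : (0:ℝ) < dh := lt_of_lt_of_le one_pos hd1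
  have e1 : Real.log (c * h ^ (β - 2) * t / dh)
      = Real.log c + (β - 2) * Real.log h + Real.log t - Real.log dh := by
    rw [Real.log_div (by positivity) (ne_of_gt hd0), Real.log_mul (by positivity) (ne_of_gt ht),
      Real.log_mul (ne_of_gt hc) (by positivity), Real.log_rpow h0]
  have e2 : Real.log (h * dh) = Real.log h + Real.log dh :=
    Real.log_mul (ne_of_gt h0) (ne_of_gt hd0)
  have e3 : Real.log (c * t) = Real.log c + Real.log t :=
    Real.log_mul (ne_of_gt hc) (ne_of_gt ht)
  have hne : (β - 1) * Real.log h ≠ 0 := mul_ne_zero hβ1 hl.ne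
  rw [hlog, e1, e2, e3]
  have hl0 : Real.log h ≠ 0 := hl.ne
  field_simp
  ring

private lemma aux_bound (β t a b c C s ε : ℝ) (hβ : 1 < β) (ht : 0 < t) (ha : 0 < a)
    (hc : 0 < c) (hC : 0 < C) (hε : |ε| ≤ 1)
    (h dh : ℝ) (h0 : 0 < h) (h1 : h < 1) (hd1 : 1 ≤ dh)
    (hlo : a ≤ h * dh) (hhi : h * dh ≤ b) :
    |h / Real.log (h ^ (β - 1)) *
        (s + ε * (C * h ^ (β - 2) * t) + dh * Real.log (c * h ^ (β - 2) * t / dh)) - h * dh|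
      ≤ (|s| + C * t + b * (|Real.log (c * t)| + |Real.log a| + |Real.log b|)) /
          ((β - 1) * (-Real.log h)) := by
  have hl : Real.log h < 0 := Real.log_neg h0 h1
  have hβ0 : (0:ℝ) < β - 1 := by linarith
  have hD : (0:ℝ) < (β - 1) * (-Real.log h) := mul_pos hβ0 (neg_pos.mpr hl)
  have hlog : Real.log (h ^ (β - 1)) = (β - 1) * Real.log h := Real.log_rpow h0 _
  have hd0 : (0:ℝ) < dh := lt_of_lt_of_le one_pos hd1
  have hb0 : (0:ℝ) < b := lt_of_lt_of_le ha (hlo.trans hhi)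
  have key := aux_main β t c ht hc h dh h0 h1 hβ0.ne' hd1
  have expand : h / Real.log (h ^ (β - 1)) *
        (s + ε * (C * h ^ (β - 2) * t) + dh * Real.log (c * h ^ (β - 2) * t / dh)) - h * dh
      = h / ((β - 1) * Real.log h) * s
        + h / ((β - 1) * Real.log h) * (ε * (C * h ^ (β - 2) * t))
        + ((h * dh) * (Real.log (c * t) - Real.log (h * dh)) / ((β - 1) * Real.log h)) := by
    rw [← key, hlog]; ring
  rw [expand]
  have habs : ∀ x : ℝ, |x / ((β - 1) * Real.log h)| = |x| / ((β - 1) * (-Real.log h)) := by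
    intro x
    rw [abs_div, abs_mul, abs_of_pos hβ0, abs_of_neg hl]
  have hterm1 : |h / ((β - 1) * Real.log h) * s| ≤ |s| / ((β - 1) * (-Real.log h)) := by
    rw [mul_comm, ← mul_div_assoc, habs]
    apply (div_le_div_iff_of_pos_right hD).mpr
    rw [abs_mul, abs_of_pos h0]
    nlinarith [abs_nonneg s]
  have hterm2 : |h / ((β - 1) * Real.log h) * (ε * (C * h ^ (β - 2) * t))|
      ≤ (C * t) / ((β - 1) * (-Real.log h)) := by
    rw [mul_comm, ← mul_div_assoc, habs]
    apply (div_le_div_iff_of_pos_right hD).mpr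
    have hpow : (0:ℝ) < h ^ (β - 2) := Real.rpow_pos_of_pos h0 _
    have e : |ε * (C * h ^ (β - 2) * t) * h| = |ε| * (C * t * (h ^ (β - 2) * h)) := by
      rw [abs_mul, abs_mul, abs_of_pos h0, abs_mul, abs_mul,
        abs_of_pos hC, abs_of_pos hpow, abs_of_pos ht]
      ring
    have hpow1 : h ^ (β - 2) * h ≤ 1 := by
      have e2 : h ^ (β - 2) * h = h ^ (β - 1) := by
        rw [show β - 1 = (β - 2) + 1 by ring, Real.rpow_add h0, Real.rpow_one]
      rw [e2]
      exact Real.rpow_le_one h0.le h1.le (by linarith)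
    rw [e]
    calc |ε| * (C * t * (h ^ (β - 2) * h)) ≤ 1 * (C * t * 1) := by
          apply mul_le_mul hε _ (by positivity) one_pos.le
          exact mul_le_mul_of_nonneg_left hpow1 (by positivity)
      _ = C * t := by ring
  have hterm3 : |(h * dh) * (Real.log (c * t) - Real.log (h * dh)) / ((β - 1) * Real.log h)|
      ≤ (b * (|Real.log (c * t)| + |Real.log a| + |Real.log b|)) /
          ((β - 1) * (-Real.log h)) := by
    rw [habs]
    apply (div_le_div_iff_of_pos_right hD).mpr
    have hlogmem : |Real.log (h * dh)| ≤ |Real.log a| + |Real.log b| := by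
      have l1 : Real.log a ≤ Real.log (h * dh) := Real.log_le_log ha hlo
      have l2 : Real.log (h * dh) ≤ Real.log b := Real.log_le_log (by positivity) hhi
      have n1 := neg_abs_le (Real.log a)
      have n2 := le_abs_self (Real.log b)
      have n3 := abs_nonneg (Real.log a)
      have n4 := abs_nonneg (Real.log b)
      rw [abs_le]
      constructor <;> linarith
    have hnum : |Real.log (c * t) - Real.log (h * dh)|
        ≤ |Real.log (c * t)| + |Real.log a| + |Real.log b| := by
      have := abs_sub (Real.log (c * t)) (Real.log (h * dh))
      linarith
    rw [abs_mul, abs_of_pos (show (0:ℝ) < h * dh by positivity)]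
    exact mul_le_mul hhi hnum (abs_nonneg _) hb0.le
  calc |h / ((β - 1) * Real.log h) * s
        + h / ((β - 1) * Real.log h) * (ε * (C * h ^ (β - 2) * t))
        + (h * dh) * (Real.log (c * t) - Real.log (h * dh)) / ((β - 1) * Real.log h)|
      ≤ |h / ((β - 1) * Real.log h) * s|
        + |h / ((β - 1) * Real.log h) * (ε * (C * h ^ (β - 2) * t))|
        + |(h * dh) * (Real.log (c * t) - Real.log (h * dh)) / ((β - 1) * Real.log h)| :=
        abs_add_three _ _ _
    _ ≤ (|s| + C * t + b * (|Real.log (c * t)| + |Real.log a| + |Real.log b|)) /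
          ((β - 1) * (-Real.log h)) := by
        rw [show (|s| + C * t + b * (|Real.log (c * t)| + |Real.log a| + |Real.log b|)) /
            ((β - 1) * (-Real.log h)) = |s| / ((β - 1) * (-Real.log h))
            + (C * t) / ((β - 1) * (-Real.log h))
            + (b * (|Real.log (c * t)| + |Real.log a| + |Real.log b|)) /
              ((β - 1) * (-Real.log h)) by rw [← add_div, ← add_div]]
        linarith


theorem graph_regime_core (β t a b c₁ c₂ C : ℝ) (hβ : 1 < β) (ht : 0 < t)
    (ha : 0 < a) (hab : a ≤ b) (hc₁ : 0 < c₁) (hc₂ : 0 < c₂) (hC : 0 < C)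
    (d p : ℝ → ℝ)
    (hd : ∀ h ∈ Set.Ioo (0:ℝ) 1, 1 ≤ d h)
    (hp : ∀ h ∈ Set.Ioo (0:ℝ) 1, 0 < p h)
    (hlow : ∀ h ∈ Set.Ioo (0:ℝ) 1, a ≤ h * d h)
    (hup : ∀ h ∈ Set.Ioo (0:ℝ) 1, h * d h ≤ b)
    (hbound₁ : ∀ h ∈ Set.Ioo (0:ℝ) 1,
      (2 * Real.pi) ^ (-(1:ℝ)/2) * Real.exp (-(C * h ^ (β - 2) * t)) *
        (c₁ * h ^ (β - 2) * t / d h) ^ (d h) ≤ p h)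
    (hbound₂ : ∀ h ∈ Set.Ioo (0:ℝ) 1,
      p h ≤ Real.exp (C * h ^ (β - 2) * t + 1) *
        (c₂ * h ^ (β - 2) * t / d h) ^ (d h)) :
    Filter.Tendsto
      (fun h : ℝ => h / Real.log (h ^ (β - 1)) * Real.log (p h) - h * d h)
      (nhdsWithin 0 (Set.Ioi 0)) (nhds 0) := by
  have hβ0 : (0:ℝ) < β - 1 := by linarith
  set s₁ : ℝ := Real.log ((2 * Real.pi) ^ (-(1:ℝ)/2)) with hs₁
  set K₁ : ℝ := |s₁| + C * t + b * (|Real.log (c₁ * t)| + |Real.log a| + |Real.log b|) with hK₁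
  set K₂ : ℝ := |(1:ℝ)| + C * t + b * (|Real.log (c₂ * t)| + |Real.log a| + |Real.log b|) with hK₂
  set K : ℝ := max K₁ K₂ with hK
  -- the squeeze bound
  have main : ∀ h ∈ Set.Ioo (0:ℝ) 1,
      |h / Real.log (h ^ (β - 1)) * Real.log (p h) - h * d h|
        ≤ K / ((β - 1) * (-Real.log h)) := by
    intro h hh
    obtain ⟨h0, h1⟩ := hh
    have hl : Real.log h < 0 := Real.log_neg h0 h1
    have hD : (0:ℝ) < (β - 1) * (-Real.log h) := mul_pos hβ0 (neg_pos.mpr hl)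
    have hd1 := hd h ⟨h0, h1⟩
    have hd0 : (0:ℝ) < d h := lt_of_lt_of_le one_pos hd1
    have hp0 := hp h ⟨h0, h1⟩
    have hpow : (0:ℝ) < h ^ (β - 2) := Real.rpow_pos_of_pos h0 _
    have hbase₁ : (0:ℝ) < c₁ * h ^ (β - 2) * t / d h := by positivity
    have hbase₂ : (0:ℝ) < c₂ * h ^ (β - 2) * t / d h := by positivity
    have hpi : (0:ℝ) < (2 * Real.pi) ^ (-(1:ℝ)/2) :=
      Real.rpow_pos_of_pos (by positivity) _
    -- log bounds
    have hlogL : s₁ + (-1) * (C * h ^ (β - 2) * t)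
          + d h * Real.log (c₁ * h ^ (β - 2) * t / d h) ≤ Real.log (p h) := by
      have := Real.log_le_log (by positivity) (hbound₁ h ⟨h0, h1⟩)
      rwa [Real.log_mul (by positivity) (by positivity),
        Real.log_mul (ne_of_gt hpi) (Real.exp_ne_zero _), Real.log_exp,
        Real.log_rpow hbase₁, ← hs₁, show Real.log ((2 * Real.pi) ^ (-(1:ℝ)/2)) + -(C * h ^ (β - 2) * t) + d h * Real.log (c₁ * h ^ (β - 2) * t / d h) = Real.log ((2 * Real.pi) ^ (-(1:ℝ)/2)) + (-1) * (C * h ^ (β - 2) * t) + d h * Real.log (c₁ * h ^ (β - 2) * t / d h) by ring] at this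
    have hlogU : Real.log (p h) ≤ (1:ℝ) + (1) * (C * h ^ (β - 2) * t)
          + d h * Real.log (c₂ * h ^ (β - 2) * t / d h) := by
      have := Real.log_le_log hp0 (hbound₂ h ⟨h0, h1⟩)
      rwa [Real.log_mul (Real.exp_ne_zero _) (by positivity), Real.log_exp,
        Real.log_rpow hbase₂, show C * h ^ (β - 2) * t + 1 + d h * Real.log (c₂ * h ^ (β - 2) * t / d h) = (1:ℝ) + (1) * (C * h ^ (β - 2) * t) + d h * Real.log (c₂ * h ^ (β - 2) * t / d h) by ring] at this
    -- multiply by the nonpositive factor G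
    have hG : h / Real.log (h ^ (β - 1)) ≤ 0 := by
      rw [Real.log_rpow h0]
      exact div_nonpos_iff.mpr (Or.inl ⟨h0.le, by nlinarith⟩)
    have hU : h / Real.log (h ^ (β - 1)) * Real.log (p h) - h * d h
        ≤ h / Real.log (h ^ (β - 1)) * (s₁ + (-1) * (C * h ^ (β - 2) * t)
          + d h * Real.log (c₁ * h ^ (β - 2) * t / d h)) - h * d h := by
      have := mul_le_mul_of_nonpos_left hlogL hG
      linarith
    have hL : h / Real.log (h ^ (β - 1)) * ((1:ℝ) + (1) * (C * h ^ (β - 2) * t)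
          + d h * Real.log (c₂ * h ^ (β - 2) * t / d h)) - h * d h
        ≤ h / Real.log (h ^ (β - 1)) * Real.log (p h) - h * d h := by
      have := mul_le_mul_of_nonpos_left hlogU hG
      linarith
    have hB₁ := aux_bound β t a b c₁ C s₁ (-1) hβ ht ha hc₁ hC (by norm_num)
      h (d h) h0 h1 hd1 (hlow h ⟨h0, h1⟩) (hup h ⟨h0, h1⟩)
    have hB₂ := aux_bound β t a b c₂ C (1:ℝ) (1:ℝ) hβ ht ha hc₂ hC (by norm_num)
      h (d h) h0 h1 hd1 (hlow h ⟨h0, h1⟩) (hup h ⟨h0, h1⟩)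
    have hK1le : K₁ / ((β - 1) * (-Real.log h)) ≤ K / ((β - 1) * (-Real.log h)) := by
      apply (div_le_div_iff_of_pos_right hD).mpr (le_max_left _ _)
    have hK2le : K₂ / ((β - 1) * (-Real.log h)) ≤ K / ((β - 1) * (-Real.log h)) := by
      apply (div_le_div_iff_of_pos_right hD).mpr (le_max_right _ _)
    rw [abs_le]
    constructor
    · have := (abs_le.mp hB₂).1
      rw [← hK₂] at this
      linarith
    · have := (abs_le.mp hB₁).2
      linarith
  -- the comparison function tends to 0
  have hcomp : Filter.Tendsto (fun h : ℝ => K / ((β - 1) * (-Real.log h)))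
      (nhdsWithin 0 (Set.Ioi 0)) (nhds 0) := by
    have h1 : Filter.Tendsto (fun h : ℝ => (β - 1) * (-Real.log h))
        (nhdsWithin 0 (Set.Ioi 0)) atTop := by
      apply Filter.Tendsto.const_mul_atTop hβ0
      exact tendsto_neg_atTop_iff.mpr Real.tendsto_log_nhdsGT_zero
    have h2 := h1.inv_tendsto_atTop
    have := h2.const_mul K
    simpa [div_eq_mul_inv] using this
  have hcomp' : Filter.Tendsto (fun h : ℝ => -(K / ((β - 1) * (-Real.log h))))
      (nhdsWithin 0 (Set.Ioi 0)) (nhds 0) := by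
    simpa using hcomp.neg
  apply tendsto_of_tendsto_of_tendsto_of_le_of_le' hcomp' hcomp
  · filter_upwards [Ioo_mem_nhdsGT_of_mem (left_mem_Ico.mpr one_pos)] with h hh
    exact (abs_le.mp (main h hh)).1.trans_eq' rfl
  · filter_upwards [Ioo_mem_nhdsGT_of_mem (left_mem_Ico.mpr one_pos)] with h hh
    exact (abs_le.mp (main h hh)).2
end

section
/- There exists a constant C > 0 such that for every ε > 0, the Lebesgue measure (on ℂ × ℂ ≅ ℝ⁴) of the set { (x, y) ∈ ℂ × ℂ : |x| ≤ 1, |y| ≤ 1, and there exists t ∈ [0,1] with |(1−t)·x + t·y| ≤ ε } is at most C·ε. -/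
open MeasureTheory Metric Set ENNReal
lemma sec_bound {ε : ℝ} (hε : 0 < ε) {x : ℂ} (hx : x ≠ 0) :
    volume {y : ℂ | ‖y‖ ≤ 1 ∧ |((starRingEnd ℂ) x * y).im| ≤ 2 * ε} ≤
      ENNReal.ofReal (8 * ε / ‖x‖) := by
  have hr : 0 < ‖x‖ := norm_pos_iff.2 hx
  set u : Circle := ⟨(starRingEnd ℂ) x / ‖x‖, by
    simp [Submonoid.unitSphere, mem_sphere_zero_iff_norm, norm_div, hr.ne', div_self (norm_pos_iff.mpr hx).ne']⟩ with hu
  set c : ℝ := 2 * ε / ‖x‖ with hc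
  have hcpos : 0 < c := by positivity
  set B : Set ℂ := {z : ℂ | |z.re| ≤ 1 ∧ |z.im| ≤ c} with hB
  have hBeq : B = Complex.measurableEquivRealProd ⁻¹' (Icc (-1 : ℝ) 1 ×ˢ Icc (-c) c) := by
    ext z
    simp only [hB, Set.mem_preimage, Complex.measurableEquivRealProd_apply, Set.mem_prod, Set.mem_Icc, Set.mem_setOf_eq, abs_le]
  have hBmeas : MeasurableSet B := by
    rw [hBeq]
    exact Complex.measurableEquivRealProd.measurable (measurableSet_Icc.prod measurableSet_Icc)
  have hsub : {y : ℂ | ‖y‖ ≤ 1 ∧ |((starRingEnd ℂ) x * y).im| ≤ 2 * ε} ⊆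
      (rotation u) ⁻¹' B := by
    intro y hy
    obtain ⟨hy1, hy2⟩ := hy
    have hru : rotation u y = ((starRingEnd ℂ) x * y) / ‖x‖ := by
      rw [rotation_apply]
      show ((starRingEnd ℂ) x / ‖x‖ : ℂ) * y = _
      ring
    constructor
    · have h1 : |(rotation u y).re| ≤ ‖rotation u y‖ := Complex.abs_re_le_norm _
      have h2 : ‖rotation u y‖ = ‖y‖ := by
        rw [rotation_apply, norm_mul, Circle.norm_coe, one_mul]
      exact h1.trans (h2.le.trans hy1)
    · show |(rotation u y).im| ≤ c
      rw [hru]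
      have him : (((starRingEnd ℂ) x * y) / ‖x‖).im = ((starRingEnd ℂ) x * y).im / ‖x‖ := by
        rw [Complex.div_ofReal_im]
      rw [him, abs_div, abs_of_pos hr, hc]
      gcongr
  calc volume {y : ℂ | ‖y‖ ≤ 1 ∧ |((starRingEnd ℂ) x * y).im| ≤ 2 * ε}
      ≤ volume ((rotation u) ⁻¹' B) := measure_mono hsub
    _ = volume B := (rotation u).measurePreserving.measure_preimage hBmeas.nullMeasurableSet
    _ = ENNReal.ofReal (8 * ε / ‖x‖) := by
      rw [hBeq, Complex.volume_preserving_equiv_real_prod.measure_preimage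
        (measurableSet_Icc.prod measurableSet_Icc).nullMeasurableSet]
      rw [Measure.volume_eq_prod, Measure.prod_prod, Real.volume_Icc, Real.volume_Icc]
      rw [← ENNReal.ofReal_mul (by norm_num)]
      congr 1
      rw [hc]
      field_simp
      ring

lemma dyadic_bound {ε : ℝ} (hε : 0 < ε) :
    ∫⁻ x in (closedBall (0:ℂ) 1 \ {0}), ENNReal.ofReal (8 * ε / ‖x‖) ≤
      ENNReal.ofReal (32 * Real.pi * ε) := by
  classical
  set A : ℕ → Set ℂ := fun k => {x : ℂ | (2⁻¹ : ℝ) ^ (k + 1) < ‖x‖ ∧ ‖x‖ ≤ (2⁻¹ : ℝ) ^ k}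
    with hA
  have hsub : closedBall (0:ℂ) 1 \ {0} ⊆ ⋃ k, A k := by
    rintro x ⟨hx1, hx0⟩
    have hpos : 0 < ‖x‖ := norm_pos_iff.2 (by simpa using hx0)
    have hle1 : ‖x‖ ≤ 1 := mem_closedBall_zero_iff.1 hx1
    have hex : ∃ n : ℕ, (2⁻¹ : ℝ) ^ n < ‖x‖ := by
      obtain ⟨n, hn⟩ := exists_pow_lt_of_lt_one hpos (by norm_num : (2⁻¹ : ℝ) < 1)
      exact ⟨n, hn⟩
    have hn0 : Nat.find hex ≠ 0 := by
      intro h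
      have := Nat.find_spec hex
      rw [h, pow_zero] at this
      exact absurd hle1 (not_le.2 this)
    obtain ⟨k, hk⟩ := Nat.exists_eq_succ_of_ne_zero hn0
    refine mem_iUnion.2 ⟨k, ?_, ?_⟩
    · have := Nat.find_spec hex
      rwa [hk] at this
    · have := Nat.find_min hex (m := k) (by omega)
      exact le_of_not_gt this
  have hmeasA : ∀ k, MeasurableSet (A k) := by
    intro k
    exact (measurableSet_lt measurable_const measurable_norm).inter
      (measurableSet_le measurable_norm measurable_const)
  calc ∫⁻ x in (closedBall (0:ℂ) 1 \ {0}), ENNReal.ofReal (8 * ε / ‖x‖)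
      ≤ ∫⁻ x in ⋃ k, A k, ENNReal.ofReal (8 * ε / ‖x‖) := lintegral_mono_set hsub
    _ ≤ ∑' k, ∫⁻ x in A k, ENNReal.ofReal (8 * ε / ‖x‖) := lintegral_iUnion_le _ _
    _ ≤ ∑' k : ℕ, ENNReal.ofReal (16 * Real.pi * ε) * (2⁻¹ : ℝ≥0∞) ^ k := by
        refine ENNReal.tsum_le_tsum fun k => ?_
        have hb : ∫⁻ x in A k, ENNReal.ofReal (8 * ε / ‖x‖) ≤
            ∫⁻ _ in A k, ENNReal.ofReal (8 * ε * 2 ^ (k + 1)) := by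
          refine setLIntegral_mono' (hmeasA k) fun x hx => ?_
          refine ENNReal.ofReal_le_ofReal ?_
          have h1 : (2⁻¹ : ℝ) ^ (k + 1) < ‖x‖ := hx.1
          have h2 : (0:ℝ) < (2⁻¹ : ℝ) ^ (k + 1) := by positivity
          rw [div_le_iff₀ (h2.trans h1)]
          calc 8 * ε = 8 * ε * ((2:ℝ) ^ (k+1) * (2⁻¹ : ℝ) ^ (k+1)) := by
                rw [← mul_pow]; norm_num
            _ ≤ 8 * ε * 2 ^ (k + 1) * ‖x‖ := by
                rw [← mul_assoc]
                gcongr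
        rw [setLIntegral_const] at hb
        have hvol : volume (A k) ≤ ENNReal.ofReal (((2⁻¹:ℝ) ^ k) ^ 2 * Real.pi) := by
          have : A k ⊆ closedBall (0:ℂ) ((2⁻¹:ℝ) ^ k) := by
            intro x hx
            exact mem_closedBall_zero_iff.2 hx.2
          refine (measure_mono this).trans ?_
          rw [Complex.volume_closedBall, ENNReal.ofReal_mul (by positivity),
            ENNReal.ofReal_pow (p := (2⁻¹:ℝ) ^ k) (n := 2) (by positivity),
            ← NNReal.coe_real_pi, ENNReal.ofReal_coe_nnreal]
        refine hb.trans ?_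
        calc ENNReal.ofReal (8 * ε * 2 ^ (k + 1)) * volume (A k)
            ≤ ENNReal.ofReal (8 * ε * 2 ^ (k + 1)) *
              ENNReal.ofReal (((2⁻¹:ℝ) ^ k) ^ 2 * Real.pi) := by gcongr
          _ = ENNReal.ofReal (8 * ε * 2 ^ (k + 1) * (((2⁻¹:ℝ) ^ k) ^ 2 * Real.pi)) := by
              rw [← ENNReal.ofReal_mul (by positivity)]
          _ = ENNReal.ofReal (16 * Real.pi * ε * (2⁻¹:ℝ) ^ k) := by
              congr 1
              have h2k : ((2:ℝ) ^ k) ≠ 0 := by positivity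
              simp only [inv_pow]
              field_simp
              ring
          _ = ENNReal.ofReal (16 * Real.pi * ε) * (2⁻¹ : ℝ≥0∞) ^ k := by
              rw [ENNReal.ofReal_mul (by positivity), ENNReal.ofReal_pow (by norm_num)]
              congr 1
              rw [ENNReal.ofReal_inv_of_pos (by norm_num)]
              norm_num
    _ = ENNReal.ofReal (16 * Real.pi * ε) * ∑' k : ℕ, (2⁻¹ : ℝ≥0∞) ^ k :=
        ENNReal.tsum_mul_left
    _ ≤ ENNReal.ofReal (32 * Real.pi * ε) := by
        rw [ENNReal.tsum_geometric]
        rw [ENNReal.one_sub_inv_two, inv_inv]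
        rw [← ENNReal.ofReal_ofNat 2, ← ENNReal.ofReal_mul (by positivity)]
        exact ENNReal.ofReal_le_ofReal (le_of_eq (by ring))

lemma key_id (x y : ℂ) (t : ℝ) :
    ((starRingEnd ℂ) x * y).im = ((starRingEnd ℂ) ((1 - t) • x + t • y) * (y - x)).im := by
  simp only [Complex.real_smul, map_add, map_mul, Complex.conj_ofReal, Complex.mul_im,
    Complex.add_re, Complex.add_im, Complex.sub_re, Complex.sub_im, Complex.mul_re,
    Complex.conj_re, Complex.conj_im, Complex.ofReal_re, Complex.ofReal_im]
  ring

theorem line_crossing_measure_bound :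
    ∃ C : ℝ, 0 < C ∧ ∀ ε : ℝ, 0 < ε →
      MeasureTheory.volume
          {p : ℂ × ℂ | ‖p.1‖ ≤ 1 ∧ ‖p.2‖ ≤ 1 ∧
            ∃ t ∈ Set.Icc (0:ℝ) 1, ‖(1 - t) • p.1 + t • p.2‖ ≤ ε}
        ≤ ENNReal.ofReal (C * ε) := by
  refine ⟨32 * Real.pi, by positivity, fun ε hε => ?_⟩
  set T : Set (ℂ × ℂ) := {p : ℂ × ℂ | ‖p.1‖ ≤ 1 ∧ ‖p.2‖ ≤ 1 ∧
    |((starRingEnd ℂ) p.1 * p.2).im| ≤ 2 * ε} with hT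
  have hTmeas : MeasurableSet T := by
    have hTeq : T = {p : ℂ × ℂ | ‖p.1‖ ≤ 1} ∩ ({p : ℂ × ℂ | ‖p.2‖ ≤ 1} ∩
        {p : ℂ × ℂ | |((starRingEnd ℂ) p.1 * p.2).im| ≤ 2 * ε}) := by
      ext p
      simp only [hT, Set.mem_setOf_eq, Set.mem_inter_iff]
    rw [hTeq]
    refine MeasurableSet.inter ?_ (MeasurableSet.inter ?_ ?_)
    · exact (isClosed_le ((continuous_norm).comp continuous_fst)
        continuous_const).measurableSet
    · exact (isClosed_le ((continuous_norm).comp continuous_snd)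
        continuous_const).measurableSet
    · refine (isClosed_le ?_ continuous_const).measurableSet
      exact (Complex.continuous_im.comp
        (((Complex.continuous_conj).comp continuous_fst).mul continuous_snd)).abs
  have hST : {p : ℂ × ℂ | ‖p.1‖ ≤ 1 ∧ ‖p.2‖ ≤ 1 ∧
      ∃ t ∈ Set.Icc (0:ℝ) 1, ‖(1 - t) • p.1 + t • p.2‖ ≤ ε} ⊆ T := by
    rintro ⟨x, y⟩ ⟨hx, hy, t, _ht, hxy⟩
    refine ⟨hx, hy, ?_⟩
    rw [key_id x y t]
    calc |((starRingEnd ℂ) ((1 - t) • x + t • y) * (y - x)).im|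
        ≤ ‖(starRingEnd ℂ) ((1 - t) • x + t • y) * (y - x)‖ :=
          Complex.abs_im_le_norm _
      _ = ‖(1 - t) • x + t • y‖ * ‖y - x‖ := by
          rw [norm_mul, Complex.norm_conj]
      _ ≤ ε * 2 := by
          refine mul_le_mul hxy ?_ (norm_nonneg _) hε.le
          have h1 : ‖y - x‖ ≤ ‖y‖ + ‖x‖ := by
            simpa using norm_sub_le y x
          linarith
      _ = 2 * ε := mul_comm _ _
  have h0 : ∀ᵐ x : ℂ, x ≠ 0 := by
    have h : volume ({0} : Set ℂ) = 0 := measure_singleton 0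
    rw [ae_iff]
    simp [not_not, h]
  have hae : ∀ᵐ x : ℂ, volume (Prod.mk x ⁻¹' T) ≤
      (closedBall (0:ℂ) 1 \ {0}).indicator (fun x => ENNReal.ofReal (8 * ε / ‖x‖)) x := by
    filter_upwards [h0] with x hx
    by_cases hx1 : ‖x‖ ≤ 1
    · have hmem : x ∈ closedBall (0:ℂ) 1 \ {0} := by
        refine ⟨mem_closedBall_zero_iff.2 ?_, hx⟩
        exact hx1
      rw [Set.indicator_of_mem hmem]
      refine le_trans (measure_mono ?_) (sec_bound hε hx)
      intro y hy
      exact ⟨hy.2.1, hy.2.2⟩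
    · have hempty : Prod.mk x ⁻¹' T = ∅ := by
        ext y
        simp only [Set.mem_preimage, Set.mem_empty_iff_false, iff_false]
        intro hy
        exact hx1 hy.1
      simp [hempty]
  calc volume {p : ℂ × ℂ | ‖p.1‖ ≤ 1 ∧ ‖p.2‖ ≤ 1 ∧
      ∃ t ∈ Set.Icc (0:ℝ) 1, ‖(1 - t) • p.1 + t • p.2‖ ≤ ε}
      ≤ volume T := measure_mono hST
    _ = ∫⁻ x : ℂ, volume (Prod.mk x ⁻¹' T) := by
        rw [Measure.volume_eq_prod, Measure.prod_apply hTmeas]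
    _ ≤ ∫⁻ x : ℂ, (closedBall (0:ℂ) 1 \ {0}).indicator
          (fun x => ENNReal.ofReal (8 * ε / ‖x‖)) x := lintegral_mono_ae hae
    _ = ∫⁻ x in (closedBall (0:ℂ) 1 \ {0}), ENNReal.ofReal (8 * ε / ‖x‖) := by
        rw [lintegral_indicator ((measurableSet_closedBall).diff (measurableSet_singleton 0))]
    _ ≤ ENNReal.ofReal (32 * Real.pi * ε) := dyadic_bound hε
end

section
/- Consider the grid graph on ℤ × ℤ, the simple graph in which two vertices u = (u₁,u₂) and v = (v₁,v₂) are adjacent if and only if |u₁ − v₁| + |u₂ − v₂| = 1, with combinatorial graph distance d and combinatorial balls B_n(u) = {v : d(u,v) ≤ n}. There exists a constant C > 0 such that for every u ∈ ℤ × ℤ, every natural number n ≥ 1 and every function f : ℤ × ℤ → ℝ, one has Σ_{v ∈ B_n(u)} (f(v) − f̄)² ≤ C·n²·Σ (f(w) − f(v))², where f̄ = (#B_n(u))^{-1}·Σ_{v ∈ B_n(u)} f(v) and the sum on the right-hand side ranges over all ordered pairs (v,w) of adjacent vertices with v, w ∈ B_{2n}(u). -/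
/-- The grid graph on `ℤ × ℤ`: two vertices are adjacent iff their ℓ¹-distance is 1. -/
def gridGraph : SimpleGraph (ℤ × ℤ) where
  Adj u v := |u.1 - v.1| + |u.2 - v.2| = 1
  symm := by
    constructor
    intro u v h
    simpa [abs_sub_comm] using h
  loopless := by
    constructor
    intro u h
    simp at h

instance : DecidableRel gridGraph.Adj :=
  fun u v => inferInstanceAs (Decidable (|u.1 - v.1| + |u.2 - v.2| = 1))

namespace GridPI

def L1 (v w : ℤ × ℤ) : ℕ := (v.1 - w.1).natAbs + (v.2 - w.2).natAbs

lemma adj_iff (v w : ℤ × ℤ) : gridGraph.Adj v w ↔ L1 v w = 1 := by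
  show |v.1 - w.1| + |v.2 - w.2| = 1 ↔ _
  rw [Int.abs_eq_natAbs, Int.abs_eq_natAbs, L1]
  exact_mod_cast Iff.rfl

lemma exists_walk (m : ℕ) : ∀ v w : ℤ × ℤ, L1 v w = m →
    ∃ p : gridGraph.Walk v w, p.length = m := by
  induction m with
  | zero =>
    intro v w h
    have h1 : v.1 = w.1 ∧ v.2 = w.2 := by unfold L1 at h; omega
    have : v = w := Prod.ext h1.1 h1.2
    subst this
    exact ⟨.nil, rfl⟩
  | succ m ih =>
    intro v w h
    unfold L1 at h
    have h4 : v.1 < w.1 ∨ w.1 < v.1 ∨ v.2 < w.2 ∨ w.2 < v.2 := by omega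
    have key : ∃ v' : ℤ × ℤ, gridGraph.Adj v v' ∧ L1 v' w = m := by
      rcases h4 with h' | h' | h' | h'
      · exact ⟨(v.1 + 1, v.2), by rw [adj_iff]; simp [L1], by simp [L1]; omega⟩
      · exact ⟨(v.1 - 1, v.2), by rw [adj_iff]; simp [L1], by simp [L1]; omega⟩
      · exact ⟨(v.1, v.2 + 1), by rw [adj_iff]; simp [L1], by simp [L1]; omega⟩
      · exact ⟨(v.1, v.2 - 1), by rw [adj_iff]; simp [L1], by simp [L1]; omega⟩
    obtain ⟨v', hadj, hL⟩ := key
    obtain ⟨p, hp⟩ := ih v' w hL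
    exact ⟨.cons hadj p, by simp [hp]⟩

lemma l1_le_length : ∀ {v w : ℤ × ℤ} (p : gridGraph.Walk v w), L1 v w ≤ p.length := by
  intro v w p
  induction p with
  | nil => simp [L1]
  | @cons v x w h p ih =>
    have h1 := (adj_iff _ _).1 h
    simp only [SimpleGraph.Walk.length_cons]
    unfold L1 at *
    omega

lemma dist_eq (v w : ℤ × ℤ) : gridGraph.dist v w = L1 v w := by
  obtain ⟨p, hp⟩ := exists_walk (L1 v w) v w rfl
  refine le_antisymm (hp ▸ SimpleGraph.dist_le p) ?_
  have hr : gridGraph.Reachable v w := ⟨p⟩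
  obtain ⟨q, hq⟩ := hr.exists_walk_length_eq_dist
  rw [← hq]
  exact l1_le_length q


lemma oneD (g : ℤ → ℝ) (lo hi : ℤ) (x₁ x₂ : ℤ)
    (hx₁ : lo ≤ x₁) (hx₂ : x₂ ≤ hi) (hle : x₁ ≤ x₂) :
    (g x₂ - g x₁) ^ 2 ≤ ((hi - lo : ℤ) : ℝ) * ∑ t ∈ Finset.Ico lo hi, (g (t + 1) - g t) ^ 2 := by
  set m : ℕ := (x₂ - x₁).toNat with hm
  have hx : x₁ + (m : ℤ) = x₂ := by omega
  have tel : ∑ i ∈ Finset.range m, (g (x₁ + (i : ℤ) + 1) - g (x₁ + (i : ℤ))) = g x₂ - g x₁ := by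
    have := Finset.sum_range_sub (fun i : ℕ => g (x₁ + (i : ℤ))) m
    simp only [Nat.cast_add, Nat.cast_one, ← add_assoc] at this ⊢
    rw [this, hx]
    norm_num
  have cs : (g x₂ - g x₁) ^ 2 ≤
      (m : ℝ) * ∑ i ∈ Finset.range m, (g (x₁ + (i : ℤ) + 1) - g (x₁ + (i : ℤ))) ^ 2 := by
    rw [← tel]
    simpa using sq_sum_le_card_mul_sum_sq
      (s := Finset.range m) (f := fun i : ℕ => g (x₁ + (i : ℤ) + 1) - g (x₁ + (i : ℤ)))
  have himg : ∑ i ∈ Finset.range m, (g (x₁ + (i : ℤ) + 1) - g (x₁ + (i : ℤ))) ^ 2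
      ≤ ∑ t ∈ Finset.Ico lo hi, (g (t + 1) - g t) ^ 2 := by
    have hinj : ∑ i ∈ Finset.range m, (g (x₁ + (i : ℤ) + 1) - g (x₁ + (i : ℤ))) ^ 2
        = ∑ t ∈ (Finset.range m).image (fun i : ℕ => x₁ + (i : ℤ)), (g (t + 1) - g t) ^ 2 := by
      rw [Finset.sum_image (by intro i _ j _ hij; simpa using hij)]
    rw [hinj]
    apply Finset.sum_le_sum_of_subset_of_nonneg
    · intro t ht
      simp only [Finset.mem_image, Finset.mem_range] at ht
      obtain ⟨i, hi, rfl⟩ := ht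
      simp only [Finset.mem_Ico]
      omega
    · intro t _ _
      positivity
  calc (g x₂ - g x₁) ^ 2 ≤ (m : ℝ) * ∑ i ∈ Finset.range m,
        (g (x₁ + (i : ℤ) + 1) - g (x₁ + (i : ℤ))) ^ 2 := cs
    _ ≤ ((hi - lo : ℤ) : ℝ) * ∑ t ∈ Finset.Ico lo hi, (g (t + 1) - g t) ^ 2 := by
        apply mul_le_mul
        · have : (m : ℤ) ≤ hi - lo := by omega
          exact_mod_cast this
        · exact himg
        · exact Finset.sum_nonneg fun i _ => by positivity
        · have : (0 : ℤ) ≤ hi - lo := by omega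
          exact_mod_cast this

lemma oneD' (g : ℤ → ℝ) (lo hi : ℤ) (x₁ x₂ : ℤ)
    (h₁ : lo ≤ x₁) (h₁' : x₁ ≤ hi) (h₂ : lo ≤ x₂) (h₂' : x₂ ≤ hi) :
    (g x₂ - g x₁) ^ 2 ≤ ((hi - lo : ℤ) : ℝ) * ∑ t ∈ Finset.Ico lo hi, (g (t + 1) - g t) ^ 2 := by
  rcases le_total x₁ x₂ with h | h
  · exact oneD g lo hi x₁ x₂ h₁ h₂' h
  · have : (g x₂ - g x₁) ^ 2 = (g x₁ - g x₂) ^ 2 := by ring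
    rw [this]
    exact oneD g lo hi x₂ x₁ h₂ h₁' h

end GridPI

open GridPI in
theorem grid_poincare_inequality :
    ∃ C : ℝ, 0 < C ∧
      ∀ (u : ℤ × ℤ) (n : ℕ), 1 ≤ n →
        ∀ (hB : {v : ℤ × ℤ | gridGraph.dist u v ≤ n}.Finite)
          (hB2 : {v : ℤ × ℤ | gridGraph.dist u v ≤ 2 * n}.Finite)
          (f : ℤ × ℤ → ℝ),
          (∑ v ∈ hB.toFinset,
              (f v - (hB.toFinset.card : ℝ)⁻¹ * ∑ w ∈ hB.toFinset, f w) ^ 2)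
            ≤ C * (n : ℝ) ^ 2 *
                ∑ v ∈ hB2.toFinset, ∑ w ∈ hB2.toFinset,
                  if gridGraph.Adj v w then (f w - f v) ^ 2 else 0 := by
  refine ⟨24, by norm_num, ?_⟩
  intro u n hn hB hB2 f
  set S := hB.toFinset with hS
  set T := hB2.toFinset with hT
  have memS : ∀ v : ℤ × ℤ, v ∈ S ↔ L1 u v ≤ n := by
    intro v
    rw [hS, Set.Finite.mem_toFinset, Set.mem_setOf_eq, dist_eq]
  have memT : ∀ v : ℤ × ℤ, v ∈ T ↔ L1 u v ≤ 2 * n := by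
    intro v
    rw [hT, Set.Finite.mem_toFinset, Set.mem_setOf_eq, dist_eq]
  have huS : u ∈ S := (memS u).2 (by simp [L1])
  set N := S.card with hNdef
  have hN : 0 < N := Finset.card_pos.2 ⟨u, huS⟩
  have hNR : (0 : ℝ) < N := by exact_mod_cast hN
  set E := ∑ v ∈ T, ∑ w ∈ T, (if gridGraph.Adj v w then (f w - f v) ^ 2 else 0) with hE
  have hgnonneg : ∀ p : (ℤ × ℤ) × (ℤ × ℤ),
      0 ≤ (if gridGraph.Adj p.1 p.2 then (f p.2 - f p.1) ^ 2 else 0) := by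
    intro p; split <;> positivity
  have hEnn : (0 : ℝ) ≤ E := by
    rw [hE]
    exact Finset.sum_nonneg fun v _ => Finset.sum_nonneg fun w _ => hgnonneg (v, w)
  have hEprod : E = ∑ p ∈ T ×ˢ T, (if gridGraph.Adj p.1 p.2 then (f p.2 - f p.1) ^ 2 else 0) := by
    rw [hE, Finset.sum_product]
  set Row : ℤ → ℝ := fun y => ∑ t ∈ Finset.Ico (u.1 - n) (u.1 + n),
      (f (t + 1, y) - f (t, y)) ^ 2 with hRow
  set Col : ℤ → ℝ := fun x => ∑ t ∈ Finset.Ico (u.2 - n) (u.2 + n),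
      (f (x, t + 1) - f (x, t)) ^ 2 with hCol
  have hRownn : ∀ y, 0 ≤ Row y := fun y => Finset.sum_nonneg fun t _ => by positivity
  have hColnn : ∀ x, 0 ≤ Col x := fun x => Finset.sum_nonneg fun t _ => by positivity
  clear_value S T N E Row Col
  -- rows embed into E
  have rowE : ∑ y ∈ Finset.Icc (u.2 - n) (u.2 + n), Row y ≤ E := by
    rw [hEprod]
    have h1 : ∑ y ∈ Finset.Icc (u.2 - n) (u.2 + n), Row y
        = ∑ q ∈ Finset.Icc (u.2 - n) (u.2 + n) ×ˢ Finset.Ico (u.1 - n) (u.1 + n),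
            (if gridGraph.Adj (q.2, q.1) (q.2 + 1, q.1) then
              (f (q.2 + 1, q.1) - f (q.2, q.1)) ^ 2 else 0) := by
      rw [Finset.sum_product]
      refine Finset.sum_congr rfl fun y _ => ?_
      rw [hRow]
      refine Finset.sum_congr rfl fun t _ => ?_
      rw [if_pos]
      rw [adj_iff]
      simp [L1]
    rw [h1]
    have h2 : ∑ q ∈ Finset.Icc (u.2 - n) (u.2 + n) ×ˢ Finset.Ico (u.1 - n) (u.1 + n),
            (if gridGraph.Adj (q.2, q.1) (q.2 + 1, q.1) then
              (f (q.2 + 1, q.1) - f (q.2, q.1)) ^ 2 else 0)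
        = ∑ p ∈ (Finset.Icc (u.2 - n) (u.2 + n) ×ˢ Finset.Ico (u.1 - n) (u.1 + n)).image
              (fun q : ℤ × ℤ => ((q.2, q.1), (q.2 + 1, q.1))),
            (if gridGraph.Adj p.1 p.2 then (f p.2 - f p.1) ^ 2 else 0) := by
      rw [Finset.sum_image]
      intro q1 _ q2 _ h
      simp only [Prod.ext_iff] at h
      exact Prod.ext h.1.2 h.1.1
    rw [h2]
    apply Finset.sum_le_sum_of_subset_of_nonneg
    · intro p hp
      simp only [Finset.mem_image, Finset.mem_product, Finset.mem_Icc, Finset.mem_Ico] at hp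
      obtain ⟨q, ⟨hy, ht⟩, rfl⟩ := hp
      rw [Finset.mem_product, memT, memT]
      constructor <;> · simp [L1]; omega
    · intro p _ _
      exact hgnonneg p
  -- columns embed into E
  have colE : ∑ x ∈ Finset.Icc (u.1 - n) (u.1 + n), Col x ≤ E := by
    rw [hEprod]
    have h1 : ∑ x ∈ Finset.Icc (u.1 - n) (u.1 + n), Col x
        = ∑ q ∈ Finset.Icc (u.1 - n) (u.1 + n) ×ˢ Finset.Ico (u.2 - n) (u.2 + n),
            (if gridGraph.Adj (q.1, q.2) (q.1, q.2 + 1) then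
              (f (q.1, q.2 + 1) - f (q.1, q.2)) ^ 2 else 0) := by
      rw [Finset.sum_product]
      refine Finset.sum_congr rfl fun x _ => ?_
      rw [hCol]
      refine Finset.sum_congr rfl fun t _ => ?_
      rw [if_pos]
      rw [adj_iff]
      simp [L1]
    rw [h1]
    have h2 : ∑ q ∈ Finset.Icc (u.1 - n) (u.1 + n) ×ˢ Finset.Ico (u.2 - n) (u.2 + n),
            (if gridGraph.Adj (q.1, q.2) (q.1, q.2 + 1) then
              (f (q.1, q.2 + 1) - f (q.1, q.2)) ^ 2 else 0)
        = ∑ p ∈ (Finset.Icc (u.1 - n) (u.1 + n) ×ˢ Finset.Ico (u.2 - n) (u.2 + n)).image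
              (fun q : ℤ × ℤ => ((q.1, q.2), (q.1, q.2 + 1))),
            (if gridGraph.Adj p.1 p.2 then (f p.2 - f p.1) ^ 2 else 0) := by
      rw [Finset.sum_image]
      intro q1 _ q2 _ h
      simp only [Prod.ext_iff] at h
      exact Prod.ext h.1.1 h.1.2
    rw [h2]
    apply Finset.sum_le_sum_of_subset_of_nonneg
    · intro p hp
      simp only [Finset.mem_image, Finset.mem_product, Finset.mem_Icc, Finset.mem_Ico] at hp
      obtain ⟨q, ⟨hx, ht⟩, rfl⟩ := hp
      rw [Finset.mem_product, memT, memT]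
      constructor <;> · simp [L1]; omega
    · intro p _ _
      exact hgnonneg p
  -- S sits inside the box
  have hSbox : S ⊆ Finset.Icc (u.1 - n) (u.1 + n) ×ˢ Finset.Icc (u.2 - n) (u.2 + n) := by
    intro v hv
    rw [memS] at hv
    simp only [L1] at hv
    rw [Finset.mem_product, Finset.mem_Icc, Finset.mem_Icc]
    omega
  have hcard : ((Finset.Icc (u.1 - n) (u.1 + n)).card : ℝ) = 2 * n + 1 := by
    rw [Int.card_Icc]
    have : ((u.1 + n) + 1 - (u.1 - n)).toNat = 2 * n + 1 := by omega
    rw [this]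
    push_cast
    ring
  have hcard2 : ((Finset.Icc (u.2 - n) (u.2 + n)).card : ℝ) = 2 * n + 1 := by
    rw [Int.card_Icc]
    have : ((u.2 + n) + 1 - (u.2 - n)).toNat = 2 * n + 1 := by omega
    rw [this]
    push_cast
    ring
  -- row sum over S
  have rowS : ∑ v ∈ S, Row v.2 ≤ (2 * n + 1 : ℝ) * E := by
    calc ∑ v ∈ S, Row v.2
        ≤ ∑ v ∈ Finset.Icc (u.1 - n) (u.1 + n) ×ˢ Finset.Icc (u.2 - n) (u.2 + n), Row v.2 :=
          Finset.sum_le_sum_of_subset_of_nonneg hSbox fun v _ _ => hRownn v.2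
      _ = ∑ x ∈ Finset.Icc (u.1 - n) (u.1 + n), ∑ y ∈ Finset.Icc (u.2 - n) (u.2 + n), Row y := by
          rw [Finset.sum_product]
      _ = ((Finset.Icc (u.1 - n) (u.1 + n)).card : ℝ) *
            ∑ y ∈ Finset.Icc (u.2 - n) (u.2 + n), Row y := by
          rw [Finset.sum_const, nsmul_eq_mul]
      _ ≤ (2 * n + 1 : ℝ) * E := by
          rw [hcard]
          exact mul_le_mul_of_nonneg_left rowE (by positivity)
  have colS : ∑ w ∈ S, Col w.1 ≤ (2 * n + 1 : ℝ) * E := by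
    calc ∑ w ∈ S, Col w.1
        ≤ ∑ w ∈ Finset.Icc (u.1 - n) (u.1 + n) ×ˢ Finset.Icc (u.2 - n) (u.2 + n), Col w.1 :=
          Finset.sum_le_sum_of_subset_of_nonneg hSbox fun w _ _ => hColnn w.1
      _ = ∑ x ∈ Finset.Icc (u.1 - n) (u.1 + n), ∑ y ∈ Finset.Icc (u.2 - n) (u.2 + n), Col x := by
          rw [Finset.sum_product]
      _ = ∑ x ∈ Finset.Icc (u.1 - n) (u.1 + n),
            ((Finset.Icc (u.2 - n) (u.2 + n)).card : ℝ) * Col x := by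
          refine Finset.sum_congr rfl fun x _ => ?_
          rw [Finset.sum_const, nsmul_eq_mul]
      _ = ((Finset.Icc (u.2 - n) (u.2 + n)).card : ℝ) *
            ∑ x ∈ Finset.Icc (u.1 - n) (u.1 + n), Col x := by
          rw [Finset.mul_sum]
      _ ≤ (2 * n + 1 : ℝ) * E := by
          rw [hcard2]
          exact mul_le_mul_of_nonneg_left colE (by positivity)
  -- per-pair bound
  have pair : ∀ v ∈ S, ∀ w ∈ S,
      (f v - f w) ^ 2 ≤ (4 * n : ℝ) * Row v.2 + (4 * n : ℝ) * Col w.1 := by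
    intro v hv w hw
    have hv' := (memS v).1 hv
    have hw' := (memS w).1 hw
    simp only [L1] at hv' hw'
    have hcast : (((u.1 + n) - (u.1 - n) : ℤ) : ℝ) = (2 * n : ℝ) := by push_cast; ring
    have hcast2 : (((u.2 + n) - (u.2 - n) : ℤ) : ℝ) = (2 * n : ℝ) := by push_cast; ring
    have h1 : (f (w.1, v.2) - f (v.1, v.2)) ^ 2 ≤ (2 * n : ℝ) * Row v.2 := by
      rw [hRow]
      have := oneD' (fun t => f (t, v.2)) (u.1 - n) (u.1 + n) v.1 w.1
        (by omega) (by omega) (by omega) (by omega)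
      rw [hcast] at this
      simpa using this
    have h2 : (f (w.1, w.2) - f (w.1, v.2)) ^ 2 ≤ (2 * n : ℝ) * Col w.1 := by
      rw [hCol]
      have := oneD' (fun t => f (w.1, t)) (u.2 - n) (u.2 + n) v.2 w.2
        (by omega) (by omega) (by omega) (by omega)
      rw [hcast2] at this
      simpa using this
    have hveq : f v = f (v.1, v.2) := by rw [Prod.mk.eta]
    have hweq : f w = f (w.1, w.2) := by rw [Prod.mk.eta]
    rw [hveq, hweq]
    nlinarith [sq_nonneg (f (v.1, v.2) + f (w.1, w.2) - 2 * f (w.1, v.2)), h1, h2]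
  -- sum over pairs
  have e1 : ∑ v ∈ S, ∑ w ∈ S, ((4 * n : ℝ) * Row v.2)
      = (4 * n : ℝ) * ((N : ℝ) * ∑ v ∈ S, Row v.2) := by
    rw [Finset.mul_sum, Finset.mul_sum]
    refine Finset.sum_congr rfl fun v _ => ?_
    rw [Finset.sum_const, nsmul_eq_mul, hNdef]
    ring
  have e2 : ∑ v ∈ S, ∑ w ∈ S, ((4 * n : ℝ) * Col w.1)
      = (4 * n : ℝ) * ((N : ℝ) * ∑ w ∈ S, Col w.1) := by
    rw [Finset.sum_const, nsmul_eq_mul]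
    have : ∑ w ∈ S, ((4 * n : ℝ) * Col w.1) = (4 * n : ℝ) * ∑ w ∈ S, Col w.1 :=
      (Finset.mul_sum _ _ _).symm
    rw [this, hNdef]
    ring
  have sumpair : ∑ v ∈ S, ∑ w ∈ S, (f v - f w) ^ 2
      ≤ (N : ℝ) * (8 * n * (2 * n + 1) * E) := by
    calc ∑ v ∈ S, ∑ w ∈ S, (f v - f w) ^ 2
        ≤ ∑ v ∈ S, ∑ w ∈ S, ((4 * n : ℝ) * Row v.2 + (4 * n : ℝ) * Col w.1) :=
          Finset.sum_le_sum fun v hv => Finset.sum_le_sum fun w hw => pair v hv w hw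
      _ = (4 * n : ℝ) * ((N : ℝ) * ∑ v ∈ S, Row v.2)
            + (4 * n : ℝ) * ((N : ℝ) * ∑ w ∈ S, Col w.1) := by
          simp only [Finset.sum_add_distrib]
          rw [e1, e2]
      _ ≤ (4 * n : ℝ) * ((N : ℝ) * ((2 * n + 1 : ℝ) * E))
            + (4 * n : ℝ) * ((N : ℝ) * ((2 * n + 1 : ℝ) * E)) := by
          gcongr
      _ = (N : ℝ) * (8 * n * (2 * n + 1) * E) := by ring
  -- mean Cauchy-Schwarz
  have key1 : (∑ v ∈ S, (f v - (N : ℝ)⁻¹ * ∑ w ∈ S, f w) ^ 2)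
      ≤ (N : ℝ)⁻¹ * ∑ v ∈ S, ∑ w ∈ S, (f v - f w) ^ 2 := by
    have step : ∀ v ∈ S, (f v - (N : ℝ)⁻¹ * ∑ w ∈ S, f w) ^ 2
        ≤ (N : ℝ)⁻¹ * ∑ w ∈ S, (f v - f w) ^ 2 := by
      intro v _
      have hsum : ∑ w ∈ S, (f v - f w) = (N : ℝ) * f v - ∑ w ∈ S, f w := by
        rw [Finset.sum_sub_distrib, Finset.sum_const, nsmul_eq_mul, hNdef]
      have hmean : f v - (N : ℝ)⁻¹ * ∑ w ∈ S, f w = (N : ℝ)⁻¹ * ∑ w ∈ S, (f v - f w) := by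
        rw [hsum, mul_sub, ← mul_assoc, inv_mul_cancel₀ hNR.ne', one_mul]
      calc (f v - (N : ℝ)⁻¹ * ∑ w ∈ S, f w) ^ 2
          = ((N : ℝ)⁻¹) ^ 2 * (∑ w ∈ S, (f v - f w)) ^ 2 := by rw [hmean]; ring
        _ ≤ ((N : ℝ)⁻¹) ^ 2 * ((N : ℝ) * ∑ w ∈ S, (f v - f w) ^ 2) := by
            refine mul_le_mul_of_nonneg_left ?_ (by positivity)
            rw [hNdef]
            exact sq_sum_le_card_mul_sum_sq
        _ = (N : ℝ)⁻¹ * ∑ w ∈ S, (f v - f w) ^ 2 := by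
            have h : ((N : ℝ)⁻¹) ^ 2 * ((N : ℝ) * ∑ w ∈ S, (f v - f w) ^ 2)
                = ((N : ℝ)⁻¹ * (N : ℝ)) * ((N : ℝ)⁻¹ * ∑ w ∈ S, (f v - f w) ^ 2) := by ring
            rw [h, inv_mul_cancel₀ hNR.ne', one_mul]
    calc (∑ v ∈ S, (f v - (N : ℝ)⁻¹ * ∑ w ∈ S, f w) ^ 2)
        ≤ ∑ v ∈ S, ((N : ℝ)⁻¹ * ∑ w ∈ S, (f v - f w) ^ 2) := Finset.sum_le_sum step
      _ = (N : ℝ)⁻¹ * ∑ v ∈ S, ∑ w ∈ S, (f v - f w) ^ 2 := (Finset.mul_sum _ _ _).symm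
  -- finish
  calc (∑ v ∈ S, (f v - (N : ℝ)⁻¹ * ∑ w ∈ S, f w) ^ 2)
      ≤ (N : ℝ)⁻¹ * ∑ v ∈ S, ∑ w ∈ S, (f v - f w) ^ 2 := key1
    _ ≤ (N : ℝ)⁻¹ * ((N : ℝ) * (8 * n * (2 * n + 1) * E)) := by
        exact mul_le_mul_of_nonneg_left sumpair (by positivity)
    _ = 8 * n * (2 * n + 1) * E := by
        rw [← mul_assoc, inv_mul_cancel₀ hNR.ne', one_mul]
    _ ≤ 24 * (n : ℝ) ^ 2 * E := by
        have hn' : (1 : ℝ) ≤ n := by exact_mod_cast hn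
        have h8 : 0 ≤ 8 * (n : ℝ) * ((n : ℝ) - 1) * E :=
          mul_nonneg (mul_nonneg (by positivity) (by linarith)) hEnn
        nlinarith [h8]
end
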